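/- arXiv:1812.11101 — 3 statements merged into one kernel-verified Lean document; each statement's English description precedes it below -/
import Mathlib

section
/- For all real h and all real z, the integral identity ∫_{−∞}^{h} φ(x) · φ(z) · [1 − e^{−(h−z)(h−x)}] dx = Φ(h)φ(z) − Φ(z)φ(h) holds. -/
open MeasureTheory ProbabilityTheory Real Set Filter

/-- The standard normal density `φ(x) = (2π)^{-1/2} exp(-x²/2)`. -/
noncomputable def stdPhi (x : ℝ) : ℝ := (Real.sqrt (2 * Real.pi))⁻¹ * Real.exp (-x ^ 2 / 2)

/-- The standard normal distribution function `Φ(x) = ∫_{-∞}^x φ(t) dt`. -/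
noncomputable def stdCdf (x : ℝ) : ℝ := ∫ t in Set.Iic x, stdPhi t

lemma integrable_stdPhi : Integrable stdPhi := by
  have h := (integrable_exp_neg_mul_sq (by norm_num : (0:ℝ) < 1/2)).const_mul
    (Real.sqrt (2 * Real.pi))⁻¹
  have e : stdPhi = fun x => (Real.sqrt (2 * Real.pi))⁻¹ * Real.exp (-(1/2) * x ^ 2) := by
    funext x
    simp only [stdPhi]
    congr 1
    ring
  rw [e]
  exact h

lemma shift_integral (h a : ℝ) :
    ∫ x in Set.Iic h, stdPhi (x + a) = ∫ y in Set.Iic (h + a), stdPhi y := by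
  have hemb : MeasurableEmbedding (fun x : ℝ => x + a) :=
    (MeasurableEquiv.addRight a).measurableEmbedding
  have hmap : Measure.map (fun x : ℝ => x + a) volume = volume :=
    map_add_right_eq_self volume a
  have := hemb.setIntegral_map (s := Set.Iic (h + a)) (g := stdPhi) (μ := volume)
  rw [hmap] at this
  rw [this]
  congr 1
  ext x
  simp

/-- The integral identity
`∫_{-∞}^h φ(x) φ(z) (1 - e^{-(h-z)(h-x)}) dx = Φ(h)φ(z) - Φ(z)φ(h)`. -/
theorem integral_p1_identity (h z : ℝ) :
    ∫ x in Set.Iic h, stdPhi x * stdPhi z * (1 - Real.exp (-(h - z) * (h - x))) =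
      stdCdf h * stdPhi z - stdCdf z * stdPhi h := by
  have ptwise : ∀ x : ℝ, stdPhi x * stdPhi z * (1 - Real.exp (-(h - z) * (h - x))) =
      stdPhi x * stdPhi z - stdPhi (x + (z - h)) * stdPhi h := by
    intro x
    have key : stdPhi x * stdPhi z * Real.exp (-(h - z) * (h - x)) =
        stdPhi (x + (z - h)) * stdPhi h := by
      simp only [stdPhi]
      rw [show ((Real.sqrt (2 * Real.pi))⁻¹ * Real.exp (-x ^ 2 / 2)) *
          ((Real.sqrt (2 * Real.pi))⁻¹ * Real.exp (-z ^ 2 / 2)) *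
          Real.exp (-(h - z) * (h - x)) =
          (Real.sqrt (2 * Real.pi))⁻¹ * (Real.sqrt (2 * Real.pi))⁻¹ *
          (Real.exp (-x ^ 2 / 2) * Real.exp (-z ^ 2 / 2) *
            Real.exp (-(h - z) * (h - x))) from by ring]
      rw [← Real.exp_add, ← Real.exp_add]
      rw [show -x ^ 2 / 2 + -z ^ 2 / 2 + -(h - z) * (h - x) =
          -(x + (z - h)) ^ 2 / 2 + -h ^ 2 / 2 from by ring]
      rw [Real.exp_add]
      ring
    rw [mul_sub, mul_one, key]
  have i1 : Integrable (fun x => stdPhi x * stdPhi z) (volume.restrict (Set.Iic h)) :=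
    (integrable_stdPhi.restrict).mul_const _
  have i2 : Integrable (fun x => stdPhi (x + (z - h)) * stdPhi h)
      (volume.restrict (Set.Iic h)) :=
    ((integrable_stdPhi.comp_add_right (z - h)).restrict).mul_const _
  calc ∫ x in Set.Iic h, stdPhi x * stdPhi z * (1 - Real.exp (-(h - z) * (h - x)))
      = ∫ x in Set.Iic h, (stdPhi x * stdPhi z - stdPhi (x + (z - h)) * stdPhi h) := by
        exact integral_congr_ae (Filter.Eventually.of_forall fun x => ptwise x)
    _ = (∫ x in Set.Iic h, stdPhi x * stdPhi z) -
          ∫ x in Set.Iic h, stdPhi (x + (z - h)) * stdPhi h := integral_sub i1 i2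
    _ = stdCdf h * stdPhi z - stdCdf z * stdPhi h := by
        rw [integral_mul_const, integral_mul_const, shift_integral]
        have : h + (z - h) = z := by ring
        rw [this]
        rfl
end

section
/- As h → ∞, ∫_{−∞}^{h} Φ(y)² φ(2h − y) dy = (1/h + O(1/h²)) φ(h); that is, there exist constants C > 0 and h₀ such that for all h ≥ h₀, | ∫_{−∞}^{h} Φ(y)² φ(2h − y) dy − φ(h)/h | ≤ C φ(h)/h². -/
open MeasureTheory ProbabilityTheory Real Set Filter

lemma stdPhi_pos (x : ℝ) : 0 < stdPhi x := by
  unfold stdPhi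
  positivity

lemma integral_stdPhi : ∫ x, stdPhi x = 1 := by
  unfold stdPhi
  rw [integral_const_mul]
  have : ∀ x : ℝ, Real.exp (-x ^ 2 / 2) = Real.exp (-(1/2) * x ^ 2) := fun x => by ring_nf
  simp_rw [this]
  rw [integral_gaussian]
  rw [inv_mul_eq_one₀ (by positivity)]
  rw [Real.sqrt_mul (by norm_num), mul_comm]
  norm_num

lemma stdCdf_nonneg (x : ℝ) : 0 ≤ stdCdf x :=
  setIntegral_nonneg measurableSet_Iic fun t _ => (stdPhi_pos t).le

lemma one_sub_stdCdf (x : ℝ) : 1 - stdCdf x = ∫ t in Ioi x, stdPhi t := by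
  have h := intervalIntegral.integral_Iic_add_Ioi (b := x) (f := stdPhi) (μ := volume)
    integrable_stdPhi.integrableOn integrable_stdPhi.integrableOn
  rw [integral_stdPhi] at h
  unfold stdCdf
  linarith

lemma stdCdf_le_one (x : ℝ) : stdCdf x ≤ 1 := by
  have h := one_sub_stdCdf x
  have : 0 ≤ ∫ t in Ioi x, stdPhi t :=
    setIntegral_nonneg measurableSet_Ioi fun t _ => (stdPhi_pos t).le
  linarith

lemma stdCdf_mono : Monotone stdCdf := fun a b hab => by
  unfold stdCdf
  exact setIntegral_mono_set integrable_stdPhi.integrableOn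
    (Filter.Eventually.of_forall fun t => (stdPhi_pos t).le)
    (HasSubset.Subset.eventuallyLE (Iic_subset_Iic.mpr hab))

lemma integral_exp_neg_mul_Ioi {c : ℝ} (hc : 0 < c) :
    ∫ t in Ioi (0:ℝ), Real.exp (-(c * t)) = 1 / c := by
  have h := integral_comp_mul_left_Ioi (fun x => Real.exp (-x)) 0 hc
  simp only [mul_zero] at h
  rw [h, integral_exp_neg_Ioi_zero, smul_eq_mul]
  field_simp

lemma integrableOn_exp_neg_mul {c : ℝ} (hc : 0 < c) :
    IntegrableOn (fun t => Real.exp (-(c * t))) (Ioi (0:ℝ)) := by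
  have := exp_neg_integrableOn_Ioi 0 hc
  exact this.congr_fun (fun t _ => by ring_nf) measurableSet_Ioi

lemma integral_Iic_eq_integral_Ioi (g : ℝ → ℝ) (h : ℝ) :
    ∫ y in Iic h, g y = ∫ t in Ioi (0:ℝ), g (h - t) := by
  have hmp : MeasurePreserving (fun t : ℝ => h - t) volume volume :=
    Measure.measurePreserving_sub_left volume h
  have hemb : MeasurableEmbedding (fun t : ℝ => h - t) := by
    have e := ((MeasurableEquiv.neg ℝ).trans (MeasurableEquiv.addLeft h)).measurableEmbedding
    convert e using 1
    funext t; simp [sub_eq_add_neg]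
  have key := hmp.setIntegral_preimage_emb hemb g (Iic h)
  have hpre : (fun t : ℝ => h - t) ⁻¹' (Iic h) = Ici 0 := by
    ext t; simp [sub_le_iff_le_add]
  rw [hpre] at key
  rw [← key, integral_Ici_eq_integral_Ioi]

lemma stdCdf_tail {x : ℝ} (hx : 0 < x) :
    1 - stdCdf x ≤ (Real.sqrt (2 * Real.pi))⁻¹ * Real.exp (-x ^ 2 / 2) / x := by
  rw [one_sub_stdCdf]
  set c := (Real.sqrt (2 * Real.pi))⁻¹ with hc
  have hcpos : 0 < c := by rw [hc]; positivity
  have hbound : ∀ t ∈ Ioi x, stdPhi t ≤ c * Real.exp (x ^ 2 / 2) * Real.exp (-(x * t)) := by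
    intro t _
    unfold stdPhi
    rw [mul_assoc, ← Real.exp_add]
    refine mul_le_mul_of_nonneg_left (Real.exp_le_exp.mpr ?_) hcpos.le
    nlinarith [sq_nonneg (t - x)]
  have hint : IntegrableOn (fun t => c * Real.exp (x ^ 2 / 2) * Real.exp (-(x * t))) (Ioi x) := by
    refine (((exp_neg_integrableOn_Ioi x hx).congr_fun (fun t _ => by ring_nf) measurableSet_Ioi).const_mul _)
  have hmono := setIntegral_mono_on integrable_stdPhi.integrableOn hint measurableSet_Ioi hbound
  refine hmono.trans ?_
  rw [integral_const_mul]
  have h2 := integral_comp_mul_left_Ioi (fun u => Real.exp (-u)) x hx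
  have : ∫ t in Ioi x, Real.exp (-(x * t)) = x⁻¹ * Real.exp (-(x * x)) := by
    rw [h2, integral_exp_neg_Ioi, smul_eq_mul]
  rw [this]
  have he : Real.exp (x ^ 2 / 2) * Real.exp (-(x * x)) = Real.exp (-x ^ 2 / 2) := by
    rw [← Real.exp_add]; ring_nf
  calc c * Real.exp (x ^ 2 / 2) * (x⁻¹ * Real.exp (-(x * x)))
      = c * (Real.exp (x ^ 2 / 2) * Real.exp (-(x * x))) / x := by ring
    _ = c * Real.exp (-x ^ 2 / 2) / x := by rw [he]
    _ ≤ c * Real.exp (-x ^ 2 / 2) / x := le_rfl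

lemma sq_le_four_exp {u : ℝ} (hu : 0 ≤ u) : u ^ 2 ≤ 4 * Real.exp u := by
  have h1 : 1 + u / 2 ≤ Real.exp (u / 2) := by
    have := Real.add_one_le_exp (u / 2); linarith
  have h2 : Real.exp u = Real.exp (u / 2) * Real.exp (u / 2) := by
    rw [← Real.exp_add]; ring_nf
  nlinarith [Real.exp_pos (u / 2)]

lemma exp_quarter_bound {h : ℝ} (hh : 1 ≤ h) : Real.exp (-h ^ 2 / 8) ≤ 8 / h ^ 2 := by
  have h1 : 1 + h ^ 2 / 8 ≤ Real.exp (h ^ 2 / 8) := by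
    have := Real.add_one_le_exp (h ^ 2 / 8); linarith
  have h3 : (0:ℝ) < h ^ 2 / 8 := by positivity
  have h4 : h ^ 2 / 8 ≤ Real.exp (h ^ 2 / 8) := by linarith
  rw [show -h ^ 2 / 8 = -(h ^ 2 / 8) by ring, Real.exp_neg]
  calc (Real.exp (h ^ 2 / 8))⁻¹ ≤ (h ^ 2 / 8)⁻¹ := by gcongr
    _ = 8 / h ^ 2 := by field_simp

lemma sqrt_two_pi_inv_le_half : (Real.sqrt (2 * Real.pi))⁻¹ ≤ 1 / 2 := by
  have h2pi : (4:ℝ) ≤ 2 * Real.pi := by nlinarith [Real.pi_gt_three]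
  have h4 : (2:ℝ) ≤ Real.sqrt (2 * Real.pi) := by
    have hs := Real.sqrt_le_sqrt h2pi
    have : Real.sqrt 4 = 2 := by
      rw [show (4:ℝ) = 2 ^ 2 by norm_num]
      exact Real.sqrt_sq (by norm_num)
    linarith
  rw [inv_le_comm₀ (by positivity) (by norm_num)]
  linarith

set_option maxHeartbeats 1000000 in
lemma key_pointwise_abs {h t a : ℝ} (hh : 1 ≤ h) (ht : 0 < t)
    (ha0 : 0 ≤ a) (ha1 : a ≤ 1)
    (hsmall : t ≤ h/2 → 1 - a ≤ 8 / h^2) :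
    0 ≤ Real.exp (-(h*t)) - a^2 * Real.exp (-(h*t)) * Real.exp (-t^2/2) ∧
    Real.exp (-(h*t)) - a^2 * Real.exp (-(h*t)) * Real.exp (-t^2/2)
      ≤ 24 / h^2 * Real.exp (-(h/2*t)) := by
  have h0 : (0:ℝ) < h := by linarith
  have hE1 : (0:ℝ) < Real.exp (-(h*t)) := Real.exp_pos _
  have hE2 : Real.exp (-t^2/2) ≤ 1 := by
    rw [Real.exp_le_one_iff]; nlinarith
  have hE2' : (0:ℝ) < Real.exp (-t^2/2) := Real.exp_pos _
  have ha2 : a^2 ≤ 1 := by nlinarith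
  have haE : a^2 * Real.exp (-t^2/2) ≤ 1 := by nlinarith [sq_nonneg a]
  constructor
  · nlinarith [mul_nonneg hE1.le (sub_nonneg.mpr haE)]
  have h1e : 1 - Real.exp (-t^2/2) ≤ t^2/2 := by
    have := Real.add_one_le_exp (-t^2/2); linarith
  have e2a : (1 - a^2) * Real.exp (-t^2/2) ≤ 1 - a^2 := by
    nlinarith [mul_nonneg (sub_nonneg.mpr ha2) (sub_nonneg.mpr hE2)]
  have s1 : 1 - a^2 * Real.exp (-t^2/2) ≤ t^2/2 + 2*(1-a) := by
    nlinarith [sq_nonneg (a-1)]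
  have hsplit : Real.exp (-(h*t)) - a^2 * Real.exp (-(h*t)) * Real.exp (-t^2/2)
      ≤ Real.exp (-(h*t)) * (t^2/2) + 2 * Real.exp (-(h*t)) * (1 - a) := by
    nlinarith [mul_le_mul_of_nonneg_left s1 hE1.le]
  have hhalf : Real.exp (-(h*t)) = Real.exp (-(h/2*t)) * Real.exp (-(h/2*t)) := by
    rw [← Real.exp_add]; ring_nf
  have hee : Real.exp (-(h/2*t)) = Real.exp (-(h*t/2)) := by ring_nf
  have hE' : (0:ℝ) < Real.exp (-(h/2*t)) := Real.exp_pos _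
  have hterm1 : Real.exp (-(h*t)) * (t^2/2) ≤ 8 / h^2 * Real.exp (-(h/2*t)) := by
    have hu := sq_le_four_exp (u := h*t/2) (by positivity)
    have h1 : (h*t/2)^2 * Real.exp (-(h*t/2)) ≤ 4 := by
      have h2 := mul_le_mul_of_nonneg_right hu (Real.exp_pos (-(h*t/2))).le
      rwa [mul_assoc, ← Real.exp_add, add_neg_cancel, Real.exp_zero, mul_one] at h2
    have key : Real.exp (-(h/2*t)) * (t^2/2) ≤ 8 / h^2 := by
      calc Real.exp (-(h/2*t)) * (t^2/2)
          = (2/h^2) * ((h*t/2)^2 * Real.exp (-(h*t/2))) := by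
            rw [hee]; field_simp
        _ ≤ (2/h^2) * 4 := mul_le_mul_of_nonneg_left h1 (by positivity)
        _ = 8 / h^2 := by ring
    calc Real.exp (-(h*t)) * (t^2/2)
        = (Real.exp (-(h/2*t)) * (t^2/2)) * Real.exp (-(h/2*t)) := by rw [hhalf]; ring
      _ ≤ 8 / h^2 * Real.exp (-(h/2*t)) := mul_le_mul_of_nonneg_right key hE'.le
  have hterm2 : 2 * Real.exp (-(h*t)) * (1 - a) ≤ 16 / h^2 * Real.exp (-(h/2*t)) := by
    have hq := exp_quarter_bound hh
    rcases le_or_gt t (h/2) with hc | hc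
    · have h1a : 1 - a ≤ 8 / h^2 := hsmall hc
      have hE1le : Real.exp (-(h*t)) ≤ Real.exp (-(h/2*t)) :=
        Real.exp_le_exp.mpr (by nlinarith)
      have p1 : Real.exp (-(h*t)) * (1-a) ≤ Real.exp (-(h/2*t)) * (1-a) :=
        mul_le_mul_of_nonneg_right hE1le (by linarith)
      have p2 : Real.exp (-(h/2*t)) * (1-a) ≤ Real.exp (-(h/2*t)) * (8/h^2) :=
        mul_le_mul_of_nonneg_left h1a hE'.le
      calc 2 * Real.exp (-(h*t)) * (1-a) = 2 * (Real.exp (-(h*t)) * (1-a)) := by ring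
        _ ≤ 2 * (Real.exp (-(h/2*t)) * (8/h^2)) :=
            mul_le_mul_of_nonneg_left (p1.trans p2) (by norm_num)
        _ = 16 / h^2 * Real.exp (-(h/2*t)) := by ring
    · have hE1le : Real.exp (-(h/2*t)) ≤ Real.exp (-h^2/8) :=
        Real.exp_le_exp.mpr (by nlinarith)
      have p1 : Real.exp (-(h*t)) * (1-a) ≤ Real.exp (-(h*t)) * 1 :=
        mul_le_mul_of_nonneg_left (by linarith) hE1.le
      have p3 : Real.exp (-(h/2*t)) * Real.exp (-(h/2*t))
          ≤ Real.exp (-h^2/8) * Real.exp (-(h/2*t)) :=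
        mul_le_mul_of_nonneg_right hE1le hE'.le
      have p4 : Real.exp (-h^2/8) * Real.exp (-(h/2*t)) ≤ (8/h^2) * Real.exp (-(h/2*t)) :=
        mul_le_mul_of_nonneg_right hq hE'.le
      calc 2 * Real.exp (-(h*t)) * (1-a) = 2 * (Real.exp (-(h*t)) * (1-a)) := by ring
        _ ≤ 2 * (Real.exp (-(h*t)) * 1) := mul_le_mul_of_nonneg_left p1 (by norm_num)
        _ = 2 * (Real.exp (-(h/2*t)) * Real.exp (-(h/2*t))) := by rw [hhalf]; ring
        _ ≤ 2 * (Real.exp (-h^2/8) * Real.exp (-(h/2*t))) :=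
            mul_le_mul_of_nonneg_left p3 (by norm_num)
        _ ≤ 2 * ((8/h^2) * Real.exp (-(h/2*t))) :=
            mul_le_mul_of_nonneg_left p4 (by norm_num)
        _ = 16 / h^2 * Real.exp (-(h/2*t)) := by ring
  calc Real.exp (-(h*t)) - a^2 * Real.exp (-(h*t)) * Real.exp (-t^2/2)
      ≤ Real.exp (-(h*t)) * (t^2/2) + 2 * Real.exp (-(h*t)) * (1 - a) := hsplit
    _ ≤ 8 / h^2 * Real.exp (-(h/2*t)) + 16 / h^2 * Real.exp (-(h/2*t)) :=
        add_le_add hterm1 hterm2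
    _ = 24 / h^2 * Real.exp (-(h/2*t)) := by ring

set_option maxHeartbeats 1000000 in
/-- As `h → ∞`, `∫_{-∞}^h Φ(y)² φ(2h - y) dy = (1/h + O(1/h²)) φ(h)`. -/
theorem integral_asymptotics :
    ∃ C > (0 : ℝ), ∃ h₀ : ℝ, ∀ h ≥ h₀,
      |(∫ y in Set.Iic h, stdCdf y ^ 2 * stdPhi (2 * h - y)) - stdPhi h / h|
        ≤ C * stdPhi h / h ^ 2 := by
  refine ⟨100, by norm_num, 1, fun h hh => ?_⟩
  have h0 : (0:ℝ) < h := by linarith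
  have hphi : (0:ℝ) < stdPhi h := stdPhi_pos h
  set F : ℝ → ℝ := fun t => stdCdf (h-t)^2 * Real.exp (-(h*t)) * Real.exp (-t^2/2) with hF
  set G : ℝ → ℝ := fun t => Real.exp (-(h*t)) with hG
  set B : ℝ → ℝ := fun t => Real.exp (-(h/2*t)) with hB
  -- step 1: substitution
  have hsub : (∫ y in Set.Iic h, stdCdf y ^ 2 * stdPhi (2 * h - y))
      = ∫ t in Ioi (0:ℝ), stdCdf (h - t) ^ 2 * stdPhi (h + t) := by
    rw [integral_Iic_eq_integral_Ioi (fun y => stdCdf y ^ 2 * stdPhi (2*h - y)) h]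
    refine setIntegral_congr_fun measurableSet_Ioi fun t _ => ?_
    have : 2*h - (h - t) = h + t := by ring
    rw [this]
  -- step 2: factor out stdPhi h
  have hfac : ∀ t : ℝ, stdCdf (h - t) ^ 2 * stdPhi (h + t) = stdPhi h * F t := by
    intro t
    simp only [stdPhi, hF]
    have he : -(h+t)^2/2 = -h^2/2 + (-(h*t) + -t^2/2) := by ring
    rw [he, Real.exp_add, Real.exp_add]
    ring
  -- measurability / integrability
  have hcdfm : Measurable stdCdf := stdCdf_mono.measurable
  have hGint : IntegrableOn G (Ioi (0:ℝ)) := integrableOn_exp_neg_mul h0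
  have hBint : IntegrableOn B (Ioi (0:ℝ)) := integrableOn_exp_neg_mul (by linarith : (0:ℝ) < h/2)
  have hFmeas : Measurable F := by
    apply Measurable.mul
    apply Measurable.mul
    · exact (hcdfm.comp (measurable_const.sub measurable_id)).pow_const 2
    · exact (measurable_const.mul measurable_id).neg.exp
    · exact ((measurable_id.pow_const 2).neg.div_const 2).exp
  have hFbound : ∀ t : ℝ, ‖F t‖ ≤ ‖G t‖ := by
    intro t
    have ha0 : 0 ≤ stdCdf (h-t) := stdCdf_nonneg _
    have ha1 : stdCdf (h-t) ≤ 1 := stdCdf_le_one _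
    have hE2 : Real.exp (-t^2/2) ≤ 1 := by
      rw [Real.exp_le_one_iff]; nlinarith [sq_nonneg t]
    have hE1 : (0:ℝ) < Real.exp (-(h*t)) := Real.exp_pos _
    have hE2' : (0:ℝ) < Real.exp (-t^2/2) := Real.exp_pos _
    have h1 : stdCdf (h-t)^2 ≤ 1 := by nlinarith
    have h2 : stdCdf (h-t)^2 * Real.exp (-t^2/2) ≤ 1 := by nlinarith [sq_nonneg (stdCdf (h-t))]
    simp only [hF, hG, Real.norm_eq_abs]
    rw [abs_of_nonneg (by positivity), abs_of_nonneg hE1.le]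
    calc stdCdf (h-t)^2 * Real.exp (-(h*t)) * Real.exp (-t^2/2)
        = (stdCdf (h-t)^2 * Real.exp (-t^2/2)) * Real.exp (-(h*t)) := by ring
      _ ≤ 1 * Real.exp (-(h*t)) := mul_le_mul_of_nonneg_right h2 hE1.le
      _ = Real.exp (-(h*t)) := one_mul _
  have hFint : IntegrableOn F (Ioi (0:ℝ)) :=
    Integrable.mono hGint hFmeas.aestronglyMeasurable (Filter.Eventually.of_forall hFbound)
  -- step 3 : values of reference integrals
  have hGval : ∫ t in Ioi (0:ℝ), G t = 1/h := integral_exp_neg_mul_Ioi h0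
  have hBval : ∫ t in Ioi (0:ℝ), B t = 1/(h/2) :=
    integral_exp_neg_mul_Ioi (by linarith : (0:ℝ) < h/2)
  -- step 4 : pointwise bound
  have hpw : ∀ t ∈ Ioi (0:ℝ), |F t - G t| ≤ 24/h^2 * B t := by
    intro t ht
    have ht' : (0:ℝ) < t := ht
    have ha0 : 0 ≤ stdCdf (h-t) := stdCdf_nonneg _
    have ha1 : stdCdf (h-t) ≤ 1 := stdCdf_le_one _
    have hsmall : t ≤ h/2 → 1 - stdCdf (h-t) ≤ 8 / h^2 := by
      intro hc
      have hmono : stdCdf (h/2) ≤ stdCdf (h-t) := stdCdf_mono (by linarith)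
      have htail := stdCdf_tail (x := h/2) (by linarith)
      have e8 : Real.exp (-(h/2)^2/2) = Real.exp (-h^2/8) := by congr 1; ring
      have step : (Real.sqrt (2 * Real.pi))⁻¹ * Real.exp (-h^2/8) / (h/2)
          ≤ Real.exp (-h^2/8) := by
        rw [div_le_iff₀ (by linarith)]
        have hcle : (Real.sqrt (2 * Real.pi))⁻¹ ≤ h/2 := by
          linarith [sqrt_two_pi_inv_le_half]
        have := mul_le_mul_of_nonneg_right hcle (Real.exp_pos (-h^2/8)).le
        linarith [this]
      have hq := exp_quarter_bound hh
      rw [e8] at htail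
      linarith
    have key := key_pointwise_abs hh ht' ha0 ha1 hsmall
    rw [abs_sub_comm]
    simp only [hF, hG, hB]
    rw [abs_of_nonneg key.1]
    exact key.2
  -- step 5 : assemble
  rw [hsub]
  simp_rw [hfac]
  rw [integral_const_mul]
  have hdiv : stdPhi h / h = stdPhi h * ∫ t in Ioi (0:ℝ), G t := by
    rw [hGval]; ring
  rw [hdiv, ← mul_sub, abs_mul, abs_of_pos hphi]
  rw [← integral_sub hFint hGint]
  have habs : |∫ t in Ioi (0:ℝ), (F t - G t)| ≤ ∫ t in Ioi (0:ℝ), |F t - G t| := by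
    simpa [Real.norm_eq_abs] using
      norm_integral_le_integral_norm (μ := volume.restrict (Ioi (0:ℝ))) (fun t => F t - G t)
  have hmono2 : ∫ t in Ioi (0:ℝ), |F t - G t| ≤ ∫ t in Ioi (0:ℝ), 24/h^2 * B t := by
    refine setIntegral_mono_on (hFint.sub hGint).abs (hBint.const_mul _) measurableSet_Ioi hpw
  have hBcalc : ∫ t in Ioi (0:ℝ), 24/h^2 * B t = 24/h^2 * (1/(h/2)) := by
    rw [integral_const_mul, hBval]
  have hchain : |∫ t in Ioi (0:ℝ), (F t - G t)| ≤ 24/h^2 * (1/(h/2)) := by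
    rw [← hBcalc]; exact habs.trans hmono2
  have hfinal : stdPhi h * |∫ t in Ioi (0:ℝ), (F t - G t)| ≤ stdPhi h * (24/h^2 * (1/(h/2))) :=
    mul_le_mul_of_nonneg_left hchain hphi.le
  refine hfinal.trans ?_
  have h48 : 24/h^2 * (1/(h/2)) = 48/h^3 := by field_simp; ring
  rw [h48]
  have hd : (48:ℝ)/h^3 ≤ 100/h^2 := by
    rw [div_le_div_iff₀ (by positivity) (by positivity)]
    nlinarith
  calc stdPhi h * (48/h^3) ≤ stdPhi h * (100/h^2) :=
        mul_le_mul_of_nonneg_left hd hphi.le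
    _ = 100 * stdPhi h / h^2 := by ring
end

section
/- Fix a > 0, set α = (1 + a + a²)/(2 + 2a + a²), and define ξ₂(t) = (1 + a + a²)^{−1/2} · [ (1+a)·W(t + 2α) − a·W(t + α) − W(t) ] for t ≥ 0, where W is a standard Brownian motion. Then for all t, t' ≥ 0: E[ξ₂(t)] = 0, E[ξ₂(t)²] = 1, and E[ξ₂(t)ξ₂(t')] = ρ₂(t − t'), where ρ₂(t) = 1 − |t| for 0 ≤ |t| ≤ α, ρ₂(t) = (1+a)(2α − |t|)/(1 + a + a²) for α ≤ |t| ≤ 2α, and ρ₂(t) = 0 for |t| ≥ 2α. -/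
open MeasureTheory ProbabilityTheory Real Set Filter

/-- `W` is a standard Brownian motion (Wiener process) on the probability space `(Ω, μ)`:
a Gaussian process with `W(0) = 0`, mean zero and covariance `E[W(s)W(t)] = min s t`
for `s, t ≥ 0`. -/
def IsStdBM {Ω : Type*} [MeasurableSpace Ω] (μ : Measure Ω) (W : ℝ → Ω → ℝ) : Prop :=
  IsProbabilityMeasure μ ∧
  (∀ t, Measurable (W t)) ∧
  (∀ ω, W 0 ω = 0) ∧
  (∀ (n : ℕ) (t c : Fin n → ℝ), ∃ v : NNReal,
      Measure.map (fun ω => ∑ i, c i * W (t i) ω) μ = gaussianReal 0 v) ∧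
  (∀ t, 0 ≤ t → ∫ ω, W t ω ∂μ = 0) ∧
  (∀ s t, 0 ≤ s → 0 ≤ t → ∫ ω, W s ω * W t ω ∂μ = min s t)

/-- The correlation function `ρ₂` of the process `ξ₂` built from a standard Brownian
motion with parameter `a > 0` and `α = (1 + a + a²)/(2 + 2a + a²)`. -/
noncomputable def rho2 (a t : ℝ) : ℝ :=
  if |t| ≤ (1 + a + a ^ 2) / (2 + 2 * a + a ^ 2) then 1 - |t|
  else if |t| ≤ 2 * ((1 + a + a ^ 2) / (2 + 2 * a + a ^ 2)) then
    (1 + a) * (2 * ((1 + a + a ^ 2) / (2 + 2 * a + a ^ 2)) - |t|) / (1 + a + a ^ 2)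
  else 0

lemma integrable_sq_gaussian (v : NNReal) :
    Integrable (fun x : ℝ => x ^ 2) (gaussianReal 0 v) := by
  by_cases hv : v = 0
  · rw [hv, gaussianReal_zero_var]
    constructor
    · exact (measurable_id.pow_const 2).aestronglyMeasurable
    · simp [HasFiniteIntegral, lintegral_dirac]
  · rw [gaussianReal_of_var_ne_zero _ hv]
    rw [integrable_withDensity_iff (measurable_gaussianPDF 0 v)
      (ae_of_all _ fun x => ENNReal.ofReal_lt_top)]
    have hv0 : (0:ℝ) < (v:ℝ) := by positivity
    have hb : (0:ℝ) < (2 * (v:ℝ))⁻¹ := by positivity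
    have h := (integrable_rpow_mul_exp_neg_mul_sq hb (s := 2) (by norm_num)).const_mul
      ((Real.sqrt (2 * Real.pi * v))⁻¹)
    refine h.congr (ae_of_all _ fun x => ?_)
    simp only []
    show _ = x ^ 2 * (gaussianPDF 0 v x).toReal
    rw [show (gaussianPDF 0 v x).toReal = gaussianPDFReal 0 v x from by
      rw [gaussianPDF_def]; exact ENNReal.toReal_ofReal (gaussianPDFReal_nonneg 0 v x)]
    unfold gaussianPDFReal
    rw [rpow_two, show -(x - 0) ^ 2 / (2 * (v:ℝ)) = -(2 * (v:ℝ))⁻¹ * x ^ 2 by field_simp; ring]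
    ring

lemma integral_nine {Ω : Type*} [MeasurableSpace Ω] (μ : Measure Ω)
    (f g : Fin 3 → Ω → ℝ) (d e : Fin 3 → ℝ)
    (hint : ∀ i j, Integrable (fun ω => f i ω * g j ω) μ) :
    ∫ ω, (∑ i, d i * f i ω) * (∑ j, e j * g j ω) ∂μ
      = ∑ i, ∑ j, d i * e j * ∫ ω, f i ω * g j ω ∂μ := by
  have hpt : ∀ ω, (∑ i, d i * f i ω) * (∑ j, e j * g j ω)
      = ∑ i, ∑ j, d i * e j * (f i ω * g j ω) := by
    intro ω
    rw [Finset.sum_mul_sum]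
    exact Finset.sum_congr rfl fun i _ => Finset.sum_congr rfl fun j _ => by ring
  simp_rw [hpt]
  rw [integral_finset_sum _ (fun i _ =>
    integrable_finset_sum _ (fun j _ => (hint i j).const_mul _))]
  refine Finset.sum_congr rfl fun i _ => ?_
  rw [integral_finset_sum _ (fun j _ => (hint i j).const_mul _)]
  exact Finset.sum_congr rfl fun j _ => integral_const_mul _ _

lemma cov_arith_le (a A t t' : ℝ) (ha : 0 < a)
    (hA : A = (1 + a + a ^ 2) / (2 + 2 * a + a ^ 2)) (h : t' ≤ t) :
    (1 + a) * (1 + a) * min (t + 2 * A) (t' + 2 * A)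
      - (1 + a) * a * min (t + 2 * A) (t' + A)
      - (1 + a) * min (t + 2 * A) t'
      - a * (1 + a) * min (t + A) (t' + 2 * A)
      + a * a * min (t + A) (t' + A)
      + a * min (t + A) t'
      - (1 + a) * min t (t' + 2 * A)
      + a * min t (t' + A)
      + min t t'
      = (1 + a + a ^ 2) * rho2 a (t - t') := by
  have hden : (0:ℝ) < 2 + 2 * a + a ^ 2 := by nlinarith
  have hnum : (0:ℝ) < 1 + a + a ^ 2 := by nlinarith
  have hA0 : 0 < A := hA ▸ div_pos hnum hden
  have habs : |t - t'| = t - t' := abs_of_nonneg (by linarith)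
  have e1 : min (t + 2 * A) (t' + 2 * A) = t' + 2 * A := min_eq_right (by linarith)
  have e2 : min (t + 2 * A) (t' + A) = t' + A := min_eq_right (by linarith)
  have e3 : min (t + 2 * A) t' = t' := min_eq_right (by linarith)
  have e5 : min (t + A) (t' + A) = t' + A := min_eq_right (by linarith)
  have e6 : min (t + A) t' = t' := min_eq_right (by linarith)
  have e9 : min t t' = t' := min_eq_right (by linarith)
  have hd0 : (2 + 2 * a + a ^ 2) ≠ 0 := ne_of_gt hden
  have hn0 : (1 + a + a ^ 2) ≠ 0 := ne_of_gt hnum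
  rcases le_or_gt (t - t') A with h1 | h1
  · have e4 : min (t + A) (t' + 2 * A) = t + A := min_eq_left (by linarith)
    have e7 : min t (t' + 2 * A) = t := min_eq_left (by linarith)
    have e8 : min t (t' + A) = t := min_eq_left (by linarith)
    have hrho : rho2 a (t - t') = 1 - (t - t') := by
      unfold rho2
      rw [habs, if_pos (by rw [← hA]; exact h1)]
    rw [e1, e2, e3, e4, e5, e6, e7, e8, e9, hrho]
    subst hA
    field_simp
    ring
  · have e4 : min (t + A) (t' + 2 * A) = t' + 2 * A := min_eq_right (by linarith)
    have e8 : min t (t' + A) = t' + A := min_eq_right (by linarith)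
    rcases le_or_gt (t - t') (2 * A) with h2 | h2
    · have e7 : min t (t' + 2 * A) = t := min_eq_left (by linarith)
      have hrho : rho2 a (t - t') = (1 + a) * (2 * A - (t - t')) / (1 + a + a ^ 2) := by
        unfold rho2
        rw [habs, if_neg (by rw [← hA]; exact not_le.mpr h1),
          if_pos (by rw [← hA]; exact h2), ← hA]
      rw [e1, e2, e3, e4, e5, e6, e7, e8, e9, hrho]
      field_simp
      ring
    · have e7 : min t (t' + 2 * A) = t' + 2 * A := min_eq_right (by linarith)
      have hrho : rho2 a (t - t') = 0 := by
        unfold rho2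
        rw [habs, if_neg (by rw [← hA]; exact not_le.mpr h1),
          if_neg (by rw [← hA]; exact not_le.mpr h2)]
      rw [e1, e2, e3, e4, e5, e6, e7, e8, e9, hrho]
      ring

lemma cov_arith (a A t t' : ℝ) (ha : 0 < a)
    (hA : A = (1 + a + a ^ 2) / (2 + 2 * a + a ^ 2)) :
    (1 + a) * (1 + a) * min (t + 2 * A) (t' + 2 * A)
      - (1 + a) * a * min (t + 2 * A) (t' + A)
      - (1 + a) * min (t + 2 * A) t'
      - a * (1 + a) * min (t + A) (t' + 2 * A)
      + a * a * min (t + A) (t' + A)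
      + a * min (t + A) t'
      - (1 + a) * min t (t' + 2 * A)
      + a * min t (t' + A)
      + min t t'
      = (1 + a + a ^ 2) * rho2 a (t - t') := by
  rcases le_total t' t with h | h
  · exact cov_arith_le a A t t' ha hA h
  · have H := cov_arith_le a A t' t ha hA h
    rw [show rho2 a (t - t') = rho2 a (t' - t) from by unfold rho2; rw [abs_sub_comm]]
    rw [min_comm (t + 2 * A) (t' + 2 * A), min_comm (t + 2 * A) (t' + A),
      min_comm (t + 2 * A) t', min_comm (t + A) (t' + 2 * A),
      min_comm (t + A) (t' + A), min_comm (t + A) t',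
      min_comm t (t' + 2 * A), min_comm t (t' + A), min_comm t t']
    linarith [H]

/-- The process `ξ₂(t) = (1+a+a²)^{-1/2} ((1+a)W(t+2α) - aW(t+α) - W(t))` has mean `0`,
variance `1` and correlation function `ρ₂`. -/
theorem xi2_moments {Ω : Type*} [MeasurableSpace Ω] (μ : Measure Ω)
    (W : ℝ → Ω → ℝ) (hW : IsStdBM μ W) (a : ℝ) (ha : 0 < a) :
    let α : ℝ := (1 + a + a ^ 2) / (2 + 2 * a + a ^ 2)
    let ξ : ℝ → Ω → ℝ := fun t ω =>
      (Real.sqrt (1 + a + a ^ 2))⁻¹ *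
        ((1 + a) * W (t + 2 * α) ω - a * W (t + α) ω - W t ω)
    ∀ t t' : ℝ, 0 ≤ t → 0 ≤ t' →
      (∫ ω, ξ t ω ∂μ) = 0 ∧ (∫ ω, (ξ t ω) ^ 2 ∂μ) = 1 ∧
        (∫ ω, ξ t ω * ξ t' ω ∂μ) = rho2 a (t - t') := by
  intro α ξ t t' ht ht'
  obtain ⟨hP, hmeas, hzero, hgauss, hmean, hcov⟩ := hW
  haveI := hP
  have hden : (0:ℝ) < 2 + 2 * a + a ^ 2 := by nlinarith
  have hnum : (0:ℝ) < 1 + a + a ^ 2 := by nlinarith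
  have hαdef : α = (1 + a + a ^ 2) / (2 + 2 * a + a ^ 2) := rfl
  have hα : 0 < α := div_pos hnum hden
  have hξ : ∀ p ω, ξ p ω = (Real.sqrt (1 + a + a ^ 2))⁻¹ *
      ((1 + a) * W (p + 2 * α) ω - a * W (p + α) ω - W p ω) := fun _ _ => rfl
  -- L² membership of each W s
  have hL2 : ∀ s : ℝ, MemLp (W s) 2 μ := by
    intro s
    obtain ⟨v, hv⟩ := hgauss 1 ![s] ![1]
    have hmap : Measure.map (W s) μ = gaussianReal 0 v := by
      rw [← hv]
      congr 1
      funext ω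
      simp
    have hid : MemLp (id : ℝ → ℝ) 2 (gaussianReal 0 v) :=
      (memLp_two_iff_integrable_sq measurable_id.aestronglyMeasurable).mpr
        (by simpa using integrable_sq_gaussian v)
    have := (memLp_map_measure_iff measurable_id.aestronglyMeasurable
      (hmeas s).aemeasurable).mp (hmap ▸ hid)
    simpa using this
  have hintW : ∀ s : ℝ, Integrable (W s) μ := fun s => (hL2 s).integrable one_le_two
  have hprod : ∀ x y : ℝ, Integrable (fun ω => W x ω * W y ω) μ := by
    intro x y
    have h := ((((hL2 x).add (hL2 y)).integrable_sq.sub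
      ((hL2 x).integrable_sq)).sub ((hL2 y).integrable_sq)).const_mul (2⁻¹ : ℝ)
    refine h.congr (ae_of_all _ fun ω => ?_)
    simp only [Pi.add_apply, Pi.sub_apply]
    ring
  have hcc : (Real.sqrt (1 + a + a ^ 2))⁻¹ * (Real.sqrt (1 + a + a ^ 2))⁻¹
      = (1 + a + a ^ 2)⁻¹ := by
    rw [← mul_inv, Real.mul_self_sqrt (le_of_lt hnum)]
  have hinv : (1 + a + a ^ 2)⁻¹ * (1 + a + a ^ 2) = 1 := inv_mul_cancel₀ (ne_of_gt hnum)
  -- covariance computation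
  have main : ∀ p q : ℝ, 0 ≤ p → 0 ≤ q →
      (∫ ω, ξ p ω * ξ q ω ∂μ) = rho2 a (p - q) := by
    intro p q hp hq
    have hnine := integral_nine μ
      (fun i => W (![p + 2 * α, p + α, p] i)) (fun j => W (![q + 2 * α, q + α, q] j))
      ![(Real.sqrt (1 + a + a ^ 2))⁻¹ * (1 + a),
        -((Real.sqrt (1 + a + a ^ 2))⁻¹ * a), -(Real.sqrt (1 + a + a ^ 2))⁻¹]
      ![(Real.sqrt (1 + a + a ^ 2))⁻¹ * (1 + a),
        -((Real.sqrt (1 + a + a ^ 2))⁻¹ * a), -(Real.sqrt (1 + a + a ^ 2))⁻¹]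
      (fun i j => hprod _ _)
    have heq : (∫ ω, ξ p ω * ξ q ω ∂μ)
        = ∑ i : Fin 3, ∑ j : Fin 3,
          (![(Real.sqrt (1 + a + a ^ 2))⁻¹ * (1 + a),
            -((Real.sqrt (1 + a + a ^ 2))⁻¹ * a), -(Real.sqrt (1 + a + a ^ 2))⁻¹] i) *
          (![(Real.sqrt (1 + a + a ^ 2))⁻¹ * (1 + a),
            -((Real.sqrt (1 + a + a ^ 2))⁻¹ * a), -(Real.sqrt (1 + a + a ^ 2))⁻¹] j) *
          ∫ ω, W (![p + 2 * α, p + α, p] i) ω * W (![q + 2 * α, q + α, q] j) ω ∂μ := by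
      rw [← hnine]
      refine integral_congr_ae (ae_of_all _ fun ω => ?_)
      simp only [hξ, Fin.sum_univ_three, Matrix.cons_val_zero, Matrix.cons_val_one,
        Matrix.head_cons, Matrix.cons_val_two, Matrix.tail_cons]
      ring
    rw [heq]
    simp only [Fin.sum_univ_three, Matrix.cons_val_zero, Matrix.cons_val_one,
      Matrix.head_cons, Matrix.cons_val_two, Matrix.tail_cons]
    rw [hcov (p + 2 * α) (q + 2 * α) (by linarith) (by linarith),
      hcov (p + 2 * α) (q + α) (by linarith) (by linarith),
      hcov (p + 2 * α) q (by linarith) (by linarith),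
      hcov (p + α) (q + 2 * α) (by linarith) (by linarith),
      hcov (p + α) (q + α) (by linarith) (by linarith),
      hcov (p + α) q (by linarith) (by linarith),
      hcov p (q + 2 * α) (by linarith) (by linarith),
      hcov p (q + α) (by linarith) (by linarith),
      hcov p q (by linarith) (by linarith)]
    have HA := cov_arith a α p q ha hαdef
    linear_combination ((Real.sqrt (1 + a + a ^ 2))⁻¹ * (Real.sqrt (1 + a + a ^ 2))⁻¹) * HA
      + rho2 a (p - q) * (1 + a + a ^ 2) * hcc + rho2 a (p - q) * hinv
  refine ⟨?_, ?_, ?_⟩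
  · -- mean
    simp only [hξ]
    rw [integral_const_mul]
    have i1 : Integrable (fun ω => (1 + a) * W (t + 2 * α) ω) μ := (hintW _).const_mul _
    have i2 : Integrable (fun ω => a * W (t + α) ω) μ := (hintW _).const_mul _
    have i12 : Integrable (fun ω => (1 + a) * W (t + 2 * α) ω - a * W (t + α) ω) μ :=
      i1.sub i2
    rw [integral_sub i12 (hintW t), integral_sub i1 i2,
      integral_const_mul, integral_const_mul,
      hmean (t + 2 * α) (by linarith), hmean (t + α) (by linarith), hmean t ht]
    ring
  · -- variance
    have hsq : (∫ ω, (ξ t ω) ^ 2 ∂μ) = ∫ ω, ξ t ω * ξ t ω ∂μ := by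
      refine integral_congr_ae (ae_of_all _ fun ω => ?_)
      ring
    rw [hsq, main t t ht ht, sub_self]
    unfold rho2
    rw [abs_zero, if_pos (le_of_lt hα)]
    ring
  · exact main t t' ht ht'
end
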